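/- If a series c over X = {x₀,x₁} has well-defined relative degree r, then the action of the affine feedback group is free at c: if c ∘̃ d_δ = c for some pair d_δ = (d_L, d_R) with d_L non-proper, then d_δ = (1,0). -/

import Mathlib

/-- Formal power series over the alphabet `X = {x₀, x₁}` (encoded as `Bool`,
with `x₀ = false` and `x₁ = true`). -/
abbrev FPS := List Bool → ℝ

/-- The letter `x₀`. -/
def x₀ : Bool := false

/-- The letter `x₁`. -/
def x₁ : Bool := true

/-- Shuffle product of formal power series, via the left-quotient recursion. -/
noncomputable def shuffle : (List Bool → ℝ) → (List Bool → ℝ) → List Bool → ℝ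
  | c, d, [] => c [] * d []
  | c, d, x :: w => shuffle (fun u => c (x :: u)) d w + shuffle c (fun u => d (x :: u)) w

/-- The series `1` (the empty word). -/
noncomputable def oneF : FPS := fun w => match w with | [] => 1 | _ => 0

/-- The series corresponding to a single word. -/
noncomputable def ind (η : List Bool) : FPS := fun w => if w = η then 1 else 0

/-- Left catenation of the series `e` by a letter `x`: the series `x e`. -/
noncomputable def pre (x : Bool) (e : FPS) : FPS :=
  fun w => match w with
  | [] => 0
  | y :: u => if y = x then e u else 0

/-- The word-indexed family of endomorphisms `φ_d`, determined by
`φ_d(x₀)(e) = x₀ e` and `φ_d(x₁)(e) = x₁(d_L ⧢ e) + x₀(d_R ⧢ e)`. -/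
noncomputable def phiW (d : FPS × FPS) : List Bool → FPS → FPS
  | [], e => e
  | x :: η, e =>
      if x then pre x₁ (shuffle d.1 (phiW d η e)) + pre x₀ (shuffle d.2 (phiW d η e))
      else pre x₀ (phiW d η e)

/-- The mixed composition product `c ∘̃ d_δ = Σ_η (c,η) φ_d(η)(1)`.
(For each word `w` only the finitely many `η` with `|η| ≤ |w|` contribute.) -/
noncomputable def mixedComp (c : FPS) (d : FPS × FPS) : FPS :=
  fun w => ∑' η : List Bool, c η * phiW d η oneF w

/-- The natural part `c_N = Σ_k (c, x₀^k) x₀^k` of a series. -/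
noncomputable def natPart (c : FPS) : FPS :=
  fun w => if w = List.replicate w.length x₀ then c w else 0

/-- `c` has relative degree `r ≥ 1`: `r` is the largest integer with
`supp(c_F) ⊆ x₀^{r-1} X*`, and `x₀^{r-1} x₁ ∈ supp(c)`, where `c_F = c - c_N`. -/
def HasRelDeg (c : FPS) (r : ℕ) : Prop :=
  1 ≤ r ∧
  (∀ w, (c - natPart c) w ≠ 0 → List.replicate (r - 1) x₀ <+: w) ∧
  ¬(∀ w, (c - natPart c) w ≠ 0 → List.replicate r x₀ <+: w) ∧
  c (List.replicate (r - 1) x₀ ++ [x₁]) ≠ 0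

section Lemmas

lemma shuffle_nil (c d : FPS) : shuffle c d [] = c [] * d [] := rfl

lemma shuffle_cons (c d : FPS) (x : Bool) (w : List Bool) :
    shuffle c d (x :: w) =
      shuffle (fun u => c (x :: u)) d w + shuffle c (fun u => d (x :: u)) w := rfl

lemma oneF_cons (x : Bool) (u : List Bool) : oneF (x :: u) = 0 := rfl

lemma ind_nil : ind ([] : List Bool) = oneF := by
  funext u; cases u <;> rfl

/-- left vanishing: if `q` vanishes on words of length `≤ |w|`, so does the shuffle. -/
lemma shuffle_eq_zero_left : ∀ (w : List Bool) (q p : FPS),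
    (∀ u, u.length ≤ w.length → q u = 0) → shuffle q p w = 0
  | [], q, p, h => by simp [shuffle_nil, h [] (by simp)]
  | x :: w, q, p, h => by
      rw [shuffle_cons, shuffle_eq_zero_left w _ p
        (fun u hu => h (x :: u) (by simpa using Nat.succ_le_succ hu)),
        shuffle_eq_zero_left w q _ (fun u hu => h u (le_trans hu (Nat.le_succ _)))]
      ring

lemma shuffle_eq_zero_right : ∀ (w : List Bool) (q p : FPS),
    (∀ u, u.length ≤ w.length → p u = 0) → shuffle q p w = 0
  | [], q, p, h => by simp [shuffle_nil, h [] (by simp)]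
  | x :: w, q, p, h => by
      rw [shuffle_cons, shuffle_eq_zero_right w _ p
        (fun u hu => h u (le_trans hu (Nat.le_succ _))),
        shuffle_eq_zero_right w q _
        (fun u hu => h (x :: u) (by simpa using Nat.succ_le_succ hu))]
      ring

lemma shuffle_congr_right : ∀ (w : List Bool) (q p p' : FPS),
    (∀ u, u.length ≤ w.length → p u = p' u) → shuffle q p w = shuffle q p' w
  | [], q, p, p', h => by simp [shuffle_nil, h [] (by simp)]
  | x :: w, q, p, p', h => by
      rw [shuffle_cons, shuffle_cons,
        shuffle_congr_right w _ p p' (fun u hu => h u (le_trans hu (Nat.le_succ _))),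
        shuffle_congr_right w q _ _
        (fun u hu => h (x :: u) (by simpa using Nat.succ_le_succ hu))]

lemma shuffle_add_left : ∀ (w : List Bool) (q q' p : FPS),
    shuffle (fun u => q u + q' u) p w = shuffle q p w + shuffle q' p w
  | [], q, q', p => by simp [shuffle_nil]; ring
  | x :: w, q, q', p => by
      simp only [shuffle_cons, shuffle_add_left w]
      ring

lemma shuffle_add_right : ∀ (w : List Bool) (q p p' : FPS),
    shuffle q (fun u => p u + p' u) w = shuffle q p w + shuffle q p' w
  | [], q, p, p' => by simp [shuffle_nil]; ring
  | x :: w, q, p, p' => by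
      simp only [shuffle_cons, shuffle_add_right w]
      ring

lemma shuffle_smul_right : ∀ (w : List Bool) (a : ℝ) (q p : FPS),
    shuffle q (fun u => a * p u) w = a * shuffle q p w
  | [], a, q, p => by simp [shuffle_nil]; ring
  | x :: w, a, q, p => by
      simp only [shuffle_cons, shuffle_smul_right w]
      ring

lemma shuffle_oneF_left : ∀ (w : List Bool) (p : FPS), shuffle oneF p w = p w
  | [], p => by simp [shuffle_nil, oneF]
  | x :: w, p => by
      rw [shuffle_cons, shuffle_eq_zero_left w _ p (fun u _ => oneF_cons x u),
        shuffle_oneF_left w]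
      ring

lemma shuffle_oneF_right : ∀ (w : List Bool) (p : FPS), shuffle p oneF w = p w
  | [], p => by simp [shuffle_nil, oneF]
  | x :: w, p => by
      rw [shuffle_cons, shuffle_eq_zero_right w p _ (fun u _ => oneF_cons x u),
        shuffle_oneF_right w]
      ring

/-- If `q` vanishes below length `|w|`, the shuffle picks only the extreme split. -/
lemma shuffle_extreme : ∀ (w : List Bool) (q p : FPS),
    (∀ u, u.length < w.length → q u = 0) → shuffle q p w = q w * p []
  | [], q, p, h => shuffle_nil q p
  | x :: w, q, p, h => by
      rw [shuffle_cons, shuffle_extreme w _ p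
        (fun u hu => h (x :: u) (by simpa using Nat.succ_lt_succ hu)),
        shuffle_eq_zero_left w q _ (fun u hu => h u (by simpa using Nat.lt_succ_of_le hu))]
      ring

/-- both-sides low-vanishing forces the shuffle to vanish on short words. -/
lemma shuffle_eq_zero_both : ∀ (w : List Bool) (m k : ℕ) (q p : FPS),
    (∀ u, u.length ≤ m → q u = 0) → (∀ u, u.length ≤ k → p u = 0) →
    w.length ≤ m + k + 1 → shuffle q p w = 0
  | [], m, k, q, p, hq, hp, _ => by simp [shuffle_nil, hq [] (by simp)]
  | x :: w, m, k, q, p, hq, hp, hw => by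
      have hw' : w.length ≤ m + k := by simpa using Nat.lt_succ_iff.mp (Nat.lt_of_lt_of_le (by simp) hw)
      have h1 : shuffle (fun u => q (x :: u)) p w = 0 := by
        rcases Nat.eq_zero_or_pos m with hm | hm
        · exact shuffle_eq_zero_right w _ p (fun u hu => hp u (by omega))
        · exact shuffle_eq_zero_both w (m-1) k _ p
            (fun u hu => hq (x :: u) (by simp; omega)) hp (by omega)
      have h2 : shuffle q (fun u => p (x :: u)) w = 0 := by
        rcases Nat.eq_zero_or_pos k with hk | hk
        · exact shuffle_eq_zero_left w q _ (fun u hu => hq u (by omega))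
        · exact shuffle_eq_zero_both w m (k-1) q _
            hq (fun u hu => hp (x :: u) (by simp; omega)) (by omega)
      rw [shuffle_cons, h1, h2]; ring

end Lemmas

lemma phiW_nil (d : FPS × FPS) (e : FPS) : phiW d [] e = e := rfl

lemma phiW_cons_false (d : FPS × FPS) (η : List Bool) (e : FPS) :
    phiW d (false :: η) e = pre x₀ (phiW d η e) := rfl

lemma phiW_cons_true (d : FPS × FPS) (η : List Bool) (e : FPS) :
    phiW d (true :: η) e =
      pre x₁ (shuffle d.1 (phiW d η e)) + pre x₀ (shuffle d.2 (phiW d η e)) := rfl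

lemma pre_nil (x : Bool) (e : FPS) : pre x e [] = 0 := rfl

lemma pre_cons (x : Bool) (e : FPS) (y : Bool) (u : List Bool) :
    pre x e (y :: u) = if y = x then e u else 0 := rfl

lemma phiW_short (d : FPS × FPS) : ∀ (η u : List Bool), u.length < η.length →
    phiW d η oneF u = 0
  | [], u, h => absurd h (by simp)
  | x :: η, [], h => by
      cases x <;> simp [phiW_cons_false, phiW_cons_true, pre_nil, Pi.add_apply]
  | x :: η, y :: u, h => by
      have h' : u.length < η.length := by simpa using Nat.lt_of_succ_lt_succ h
      have hz : ∀ v : List Bool, v.length ≤ u.length → phiW d η oneF v = 0 :=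
        fun v hv => phiW_short d η v (lt_of_le_of_lt hv h')
      cases x
      · simp only [phiW_cons_false, pre_cons]
        split <;> [exact phiW_short d η u h'; rfl]
      · simp only [phiW_cons_true, Pi.add_apply, pre_cons]
        rw [shuffle_eq_zero_right u d.1 _ hz, shuffle_eq_zero_right u d.2 _ hz]
        split <;> split <;> ring

lemma ind_cons (x : Bool) (η : List Bool) (y : Bool) (u : List Bool) :
    ind (x :: η) (y :: u) = if y = x then ind η u else 0 := by
  simp only [ind, List.cons.injEq]
  by_cases h1 : y = x <;> by_cases h2 : u = η <;> simp [h1, h2]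

lemma phiW_eq_ind (d : FPS × FPS) (n : ℕ)
    (hIH : ∀ u : List Bool, u.length < n → d.1 u = oneF u ∧ d.2 u = 0) :
    ∀ (u η : List Bool), u.length < η.length + n → phiW d η oneF u = ind η u
  | u, [], h => by rw [phiW_nil, ind_nil]
  | [], x :: η, h => by
      cases x <;>
        simp [phiW_cons_false, phiW_cons_true, pre_nil, Pi.add_apply, ind]
  | y :: u, x :: η', h => by
      rcases Nat.eq_zero_or_pos n with hn | hn
      · subst hn
        rw [phiW_short d _ _ (by simp at h ⊢; omega)]
        have : (y :: u) ≠ (x :: η') := fun hh => by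
          have := congrArg List.length hh; simp at this h; omega
        simp [ind, this]
      · have hu : u.length < η'.length + n := by simp at h; omega
        cases x
        · -- x = x₀
          rw [phiW_cons_false, pre_cons, ind_cons]
          simp only [x₀]
          by_cases hy : y = false <;> simp only [hy, if_true, if_false, eq_self_iff_true, Bool.true_eq_false] <;> exact phiW_eq_ind d n hIH u η' hu
        · -- x = x₁
          have hP : shuffle oneF (phiW d η' oneF) u = ind η' u := by
            rw [shuffle_oneF_left]; exact phiW_eq_ind d n hIH u η' hu
          have hδL : shuffle (fun x => d.1 x - oneF x) (phiW d η' oneF) u = 0 := by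
            cases η' with
            | nil =>
                rw [phiW_nil, shuffle_oneF_right]
                have := (hIH u (by simp at h; omega)).1
                rw [this]; ring
            | cons z η'' =>
                exact shuffle_eq_zero_both u (n-1) ((z :: η'').length - 1) _ _
                  (fun v hv => by have := (hIH v (by omega)).1; rw [this]; ring)
                  (fun v hv => phiW_short d _ v (by simp; simp at hv; omega))
                  (by simp at hu ⊢; omega)
          have hδR : shuffle d.2 (phiW d η' oneF) u = 0 := by
            cases η' with
            | nil =>
                rw [phiW_nil, shuffle_oneF_right]
                exact (hIH u (by simp at h; omega)).2
            | cons z η'' =>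
                exact shuffle_eq_zero_both u (n-1) ((z :: η'').length - 1) _ _
                  (fun v hv => (hIH v (by omega)).2)
                  (fun v hv => phiW_short d _ v (by simp; simp at hv; omega))
                  (by simp at hu ⊢; omega)
          have hL : shuffle d.1 (phiW d η' oneF) u = ind η' u := by
            have hsplit := shuffle_add_left u oneF (fun x => d.1 x - oneF x) (phiW d η' oneF)
            rw [(funext fun x => by ring :
              (fun x => oneF x + (d.1 x - oneF x)) = d.1)] at hsplit
            rw [hsplit, hP, hδL]; ring
          rw [phiW_cons_true, Pi.add_apply, pre_cons, pre_cons, ind_cons]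
          cases y <;> simp [x₀, x₁, hL, hδR]

noncomputable def Sfin (n : ℕ) : Finset (List Bool) :=
  (List.finite_length_le Bool n).toFinset

lemma mem_Sfin {n : ℕ} {l : List Bool} : l ∈ Sfin n ↔ l.length ≤ n := by
  simp [Sfin]

lemma mixedComp_eq_sum (c : FPS) (d : FPS × FPS) (w : List Bool) :
    mixedComp c d w = ∑ η ∈ Sfin w.length, c η * phiW d η oneF w := by
  refine tsum_eq_sum ?_
  intro η hη
  rw [phiW_short d η w (by simpa using lt_of_not_ge (fun hh => hη (mem_Sfin.mpr hh)))]
  ring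

lemma mixedComp_restrict (c : FPS) (d : FPS × FPS) {n : ℕ} {w : List Bool}
    (hw : w.length ≤ n) :
    mixedComp c d w = ∑ η ∈ Sfin n, c η * phiW d η oneF w := by
  rw [mixedComp_eq_sum]
  refine Finset.sum_subset (fun l hl => mem_Sfin.mpr (le_trans (mem_Sfin.mp hl) hw)) ?_
  intro η _ hη
  rw [phiW_short d η w (by simpa using lt_of_not_ge (fun hh => hη (mem_Sfin.mpr hh)))]
  ring

lemma mixedComp_eq_self (d : FPS × FPS) (n : ℕ)
    (hIH : ∀ u : List Bool, u.length < n → d.1 u = oneF u ∧ d.2 u = 0)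
    (e : FPS) (u : List Bool) (hu : u.length ≤ n) : mixedComp e d u = e u := by
  rw [mixedComp_eq_sum]
  have hterm : ∀ η ∈ Sfin u.length, e η * phiW d η oneF u = if η = u then e η else 0 := by
    intro η _
    have hφ : phiW d η oneF u = ind η u := by
      cases η with
      | nil => rw [phiW_nil, ind_nil]
      | cons x η' => exact phiW_eq_ind d n hIH u (x :: η') (by simp; omega)
    rw [hφ, ind]
    by_cases hh : u = η <;> simp [hh, eq_comm]
  rw [Finset.sum_congr rfl hterm, Finset.sum_ite_eq' (Sfin u.length) u e,
    if_pos (mem_Sfin.mpr le_rfl)]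

lemma shuffle_sum_right (s : Finset (List Bool)) (q : FPS) (f : List Bool → FPS)
    (w : List Bool) :
    shuffle q (fun v => ∑ i ∈ s, f i v) w = ∑ i ∈ s, shuffle q (f i) w := by
  classical
  induction s using Finset.induction_on with
  | empty => simp only [Finset.sum_empty]; exact shuffle_eq_zero_right w q _ (fun _ _ => rfl)
  | insert _ _ ha ih =>
      rename_i a s
      simp only [Finset.sum_insert ha]
      rw [shuffle_add_right, ih]

lemma sum_cons_split (n : ℕ) (f : List Bool → ℝ) :
    ∑ η ∈ Sfin (n + 1), f η =
      f [] + (∑ η ∈ Sfin n, f (false :: η)) + ∑ η ∈ Sfin n, f (true :: η) := by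
  classical
  have h : Sfin (n + 1) =
      insert ([] : List Bool)
        (((Sfin n).image (false :: ·)) ∪ ((Sfin n).image (true :: ·))) := by
    ext η
    cases η with
    | nil => simp [mem_Sfin]
    | cons x t => cases x <;> simp [mem_Sfin, Nat.succ_le_succ_iff]
  rw [h, Finset.sum_insert (by simp), Finset.sum_union
      (by simp [Finset.disjoint_left]),
    Finset.sum_image (fun a _ b _ hab => by injection hab),
    Finset.sum_image (fun a _ b _ hab => by injection hab)]
  ring

lemma mixedComp_cons_true (c : FPS) (d : FPS × FPS) (u : List Bool) :
    mixedComp c d (true :: u) =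
      shuffle d.1 (mixedComp (fun v => c (true :: v)) d) u := by
  have h0 : c [] * phiW d [] oneF (true :: u) = 0 := by
    rw [phiW_nil]; simp [oneF]
  have hF : ∑ η ∈ Sfin u.length, c (false :: η) * phiW d (false :: η) oneF (true :: u)
      = 0 :=
    Finset.sum_eq_zero (fun η _ => by rw [phiW_cons_false, pre_cons]; simp [x₀])
  have hT : ∀ η ∈ Sfin u.length,
      c (true :: η) * phiW d (true :: η) oneF (true :: u)
        = shuffle d.1 (fun v => c (true :: η) * phiW d η oneF v) u := by
    intro η _
    rw [phiW_cons_true, Pi.add_apply, pre_cons, pre_cons, shuffle_smul_right]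
    simp [x₀, x₁]
  calc mixedComp c d (true :: u)
      = ∑ η ∈ Sfin (u.length + 1), c η * phiW d η oneF (true :: u) :=
        mixedComp_eq_sum c d (true :: u)
    _ = (c [] * phiW d [] oneF (true :: u))
        + (∑ η ∈ Sfin u.length, c (false :: η) * phiW d (false :: η) oneF (true :: u))
        + ∑ η ∈ Sfin u.length, c (true :: η) * phiW d (true :: η) oneF (true :: u) :=
        sum_cons_split u.length _
    _ = ∑ η ∈ Sfin u.length, shuffle d.1 (fun v => c (true :: η) * phiW d η oneF v) u := by
        rw [h0, hF, Finset.sum_congr rfl hT]; ring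
    _ = shuffle d.1 (fun v => ∑ η ∈ Sfin u.length, c (true :: η) * phiW d η oneF v) u :=
        (shuffle_sum_right _ _ _ _).symm
    _ = shuffle d.1 (mixedComp (fun v => c (true :: v)) d) u :=
        shuffle_congr_right u d.1 _ _
          (fun v hv => (mixedComp_restrict (fun w => c (true :: w)) d hv).symm)

lemma mixedComp_cons_false (c : FPS) (d : FPS × FPS) (u : List Bool) :
    mixedComp c d (false :: u) =
      mixedComp (fun v => c (false :: v)) d u
        + shuffle d.2 (mixedComp (fun v => c (true :: v)) d) u := by
  have h0 : c [] * phiW d [] oneF (false :: u) = 0 := by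
    rw [phiW_nil]; simp [oneF]
  have hF : ∀ η ∈ Sfin u.length,
      c (false :: η) * phiW d (false :: η) oneF (false :: u)
        = c (false :: η) * phiW d η oneF u := by
    intro η _
    rw [phiW_cons_false, pre_cons]
    simp [x₀]
  have hT : ∀ η ∈ Sfin u.length,
      c (true :: η) * phiW d (true :: η) oneF (false :: u)
        = shuffle d.2 (fun v => c (true :: η) * phiW d η oneF v) u := by
    intro η _
    rw [phiW_cons_true, Pi.add_apply, pre_cons, pre_cons, shuffle_smul_right]
    simp [x₀, x₁]
  calc mixedComp c d (false :: u)
      = ∑ η ∈ Sfin (u.length + 1), c η * phiW d η oneF (false :: u) :=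
        mixedComp_eq_sum c d (false :: u)
    _ = (c [] * phiW d [] oneF (false :: u))
        + (∑ η ∈ Sfin u.length, c (false :: η) * phiW d (false :: η) oneF (false :: u))
        + ∑ η ∈ Sfin u.length, c (true :: η) * phiW d (true :: η) oneF (false :: u) :=
        sum_cons_split u.length _
    _ = (∑ η ∈ Sfin u.length, c (false :: η) * phiW d η oneF u)
        + ∑ η ∈ Sfin u.length, shuffle d.2 (fun v => c (true :: η) * phiW d η oneF v) u := by
        rw [h0, Finset.sum_congr rfl hF, Finset.sum_congr rfl hT]; ring
    _ = mixedComp (fun v => c (false :: v)) d u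
        + shuffle d.2 (fun v => ∑ η ∈ Sfin u.length, c (true :: η) * phiW d η oneF v) u := by
        rw [← shuffle_sum_right, (mixedComp_eq_sum (fun v => c (false :: v)) d u)]
    _ = _ := by
        rw [shuffle_congr_right u d.2 _ _
          (fun v hv => (mixedComp_restrict (fun w => c (true :: w)) d hv).symm)]

lemma core (b : FPS) (d : FPS × FPS) (hb : ∀ u, mixedComp b d u = b u)
    (hK : b [true] ≠ 0) : ∀ v : List Bool, d.1 v = oneF v ∧ d.2 v = 0 := by
  have main : ∀ (n : ℕ) (v : List Bool), v.length = n →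
      (∀ u : List Bool, u.length < n → d.1 u = oneF u ∧ d.2 u = 0) →
      d.1 v = oneF v ∧ d.2 v = 0 := by
    intro n v hv hIH
    have hb1 : ∀ u : List Bool, u.length ≤ n →
        mixedComp (fun w => b (true :: w)) d u = b (true :: u) :=
      fun u hu => mixedComp_eq_self d n hIH _ u hu
    -- the dL equation
    have h1 : b (true :: v) = shuffle d.1 (fun w => b (true :: w)) v := by
      rw [← hb (true :: v), mixedComp_cons_true]
      exact shuffle_congr_right v d.1 _ _ (fun w hw => hb1 w (by omega))
    have hsplit := shuffle_add_left v oneF (fun x => d.1 x - oneF x) (fun w => b (true :: w))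
    rw [(funext fun x => by ring : (fun x => oneF x + (d.1 x - oneF x)) = d.1)] at hsplit
    have hδ : shuffle (fun x => d.1 x - oneF x) (fun w => b (true :: w)) v
        = (d.1 v - oneF v) * b [true] :=
      shuffle_extreme v _ _ (fun u hu => by
        have := (hIH u (by omega)).1; rw [this]; ring)
    have hL : d.1 v = oneF v := by
      have := h1
      rw [hsplit, shuffle_oneF_left, hδ] at this
      have h2 : (d.1 v - oneF v) * b [true] = 0 := by linarith
      rcases mul_eq_zero.mp h2 with h3 | h3
      · linarith
      · exact absurd h3 hK
    refine ⟨hL, ?_⟩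
    -- the dR equation
    have h2 : b (false :: v) = mixedComp (fun w => b (false :: w)) d v
        + shuffle d.2 (mixedComp (fun w => b (true :: w)) d) v := by
      rw [← hb (false :: v), mixedComp_cons_false]
    have h3 : shuffle d.2 (mixedComp (fun w => b (true :: w)) d) v
        = shuffle d.2 (fun w => b (true :: w)) v :=
      shuffle_congr_right v d.2 _ _ (fun w hw => hb1 w (by omega))
    have h4 : shuffle d.2 (fun w => b (true :: w)) v = d.2 v * b [true] :=
      shuffle_extreme v _ _ (fun u hu => (hIH u (by omega)).2)
    have h5 : mixedComp (fun w => b (false :: w)) d v = b (false :: v) :=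
      mixedComp_eq_self d n hIH _ v (by omega)
    rw [h3, h4, h5] at h2
    have h6 : d.2 v * b [true] = 0 := by linarith
    rcases mul_eq_zero.mp h6 with h7 | h7
    · exact h7
    · exact absurd h7 hK
  have key : ∀ (n : ℕ) (v : List Bool), v.length = n → d.1 v = oneF v ∧ d.2 v = 0 := by
    intro n
    induction n using Nat.strong_induction_on with
    | _ n ih =>
        intro v hv
        exact main n v hv (fun u hu => ih u.length (hv ▸ hu) u rfl)
  exact fun v => key v.length v rfl

lemma supp0 (c : FPS) (r : ℕ) (h : HasRelDeg c r) :
    ∀ k, k < r - 1 → ∀ v, c (List.replicate k x₀ ++ true :: v) = 0 := by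
  intro k hk v
  by_contra hne
  set w := List.replicate k x₀ ++ true :: v with hw
  have hmem : true ∈ w := by simp [hw]
  have hnat : natPart c w = 0 := by
    rw [natPart, if_neg]
    intro heq
    have := List.eq_of_mem_replicate (heq ▸ hmem)
    simp [x₀] at this
  have hsub : (c - natPart c) w ≠ 0 := by
    simp [Pi.sub_apply, hnat, hne]
  have hpre := h.2.1 w hsub
  have hpre2 : List.replicate (k + 1) x₀ <+: w := by
    refine List.IsPrefix.trans ⟨List.replicate (r - 1 - (k + 1)) x₀, ?_⟩ hpre
    rw [← List.replicate_add]; congr 1; omega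
  have htake := List.prefix_iff_eq_take.mp hpre2
  rw [List.length_replicate] at htake
  have hw2 : w.take (k + 1) = List.replicate k x₀ ++ [true] := by
    rw [hw, List.take_append]
    simp
  rw [hw2, List.replicate_succ'] at htake
  have := List.append_cancel_left htake
  simp [x₀] at this


/-- The affine feedback group acts freely on series with well-defined relative degree. -/
theorem free_action_of_relDeg (c : FPS) (r : ℕ) (h : HasRelDeg c r)
    (d : FPS × FPS) (hd : d.1 [] ≠ 0) (hfix : mixedComp c d = c) :
    d = (oneF, (0 : FPS)) := by

  have red : ∀ k, k ≤ r - 1 → ∀ u,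
      mixedComp (fun v => c (List.replicate k x₀ ++ v)) d u
        = c (List.replicate k x₀ ++ u) := by
    intro k
    induction k with
    | zero => intro _ u; simpa using congrFun hfix u
    | succ k ih =>
        intro hk1 u
        have hk : k ≤ r - 1 := by omega
        have hzero := supp0 c r h k (by omega)
        have hshuf : shuffle d.2
            (mixedComp (fun v => c (List.replicate k x₀ ++ true :: v)) d) u = 0 :=
          shuffle_eq_zero_right u _ _ (fun w _ => by
            rw [mixedComp_eq_sum]
            exact Finset.sum_eq_zero (fun η _ => by rw [hzero]; ring))
        have hA : mixedComp (fun v => c (List.replicate k x₀ ++ (false :: v))) d u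
            = c (List.replicate k x₀ ++ (false :: u)) := by
          calc mixedComp (fun v => c (List.replicate k x₀ ++ (false :: v))) d u
              = mixedComp (fun v => c (List.replicate k x₀ ++ (false :: v))) d u
                + shuffle d.2
                  (mixedComp (fun v => c (List.replicate k x₀ ++ true :: v)) d) u := by
                rw [hshuf]; ring
            _ = mixedComp (fun v => c (List.replicate k x₀ ++ v)) d (false :: u) :=
                (mixedComp_cons_false (fun v => c (List.replicate k x₀ ++ v)) d u).symm
            _ = c (List.replicate k x₀ ++ (false :: u)) := ih hk (false :: u)
        have e1 : (fun v => c (List.replicate (k + 1) x₀ ++ v))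
            = fun v => c (List.replicate k x₀ ++ (false :: v)) := by
          funext v; rw [List.replicate_succ', List.append_assoc]; rfl
        have e2 : List.replicate (k + 1) x₀ ++ u = List.replicate k x₀ ++ (false :: u) := by
          rw [List.replicate_succ', List.append_assoc]; rfl
        rw [e1, e2]; exact hA
  have hb := red (r - 1) le_rfl
  have hK : (fun v => c (List.replicate (r - 1) x₀ ++ v)) [true] ≠ 0 := h.2.2.2
  have hall := core _ d hb hK
  have h1 : d.1 = oneF := funext fun v => (hall v).1
  have h2 : d.2 = (0 : FPS) := funext fun v => (hall v).2
  calc d = (d.1, d.2) := rfl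
    _ = (oneF, (0 : FPS)) := by rw [h1, h2]
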